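/- Let G = (V, E) be an edge-labeled DAG with labels c : E → ℝ and let (i,j) ∈ E be an edge whose target j is not a sink. Let G' be obtained by front elimination of (i,j): for every successor k of j, the label of edge (i,k) becomes c(i,k) + c(j,k)·c(i,j) if (i,k) ∈ E and otherwise the fill edge (i,k) with label c(j,k)·c(i,j) is inserted; the edge (i,j) is removed; and if j thereby has no remaining incoming edges, j is removed together with all its outgoing edges. Then for every source s and sink t of G, the path sums agree: J_{G'}(s, t) = J_G(s, t). -/

import Mathlib

open scoped Classical

/-- A path from `s` to `t`: a nonempty sequence of consecutive edges, recorded as the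
list of its vertices (at least two of them, consecutive ones related by `R`). -/
def IsPath {α : Type*} (R : α → α → Prop) (s t : α) (p : List α) : Prop :=
  2 ≤ p.length ∧ p.Chain' R ∧ p.head? = some s ∧ p.getLast? = some t

/-- The path sum `J_G(s,t)`: the sum over all paths from `s` to `t` of the product of
the edge labels along the path (an empty sum is `0`). -/
noncomputable def pathSum {α : Type*} (R : α → α → Prop) (c : α → α → ℝ) (s t : α) : ℝ :=
  ∑' p : {p : List α // IsPath R s t p},
    ((p.1.zip p.1.tail).map (fun e => c e.1 e.2)).prod

/-- Adjacency after front elimination of the edge `(i,j)`: for every successor `k` of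
`j` the (possibly fill) edge `(i,k)` is inserted, the edge `(i,j)` is removed, and if
`j` thereby has no incoming edges left, `j` is removed (isolated) together with its
outgoing edges. -/
def frontAdj {V : Type*} [Fintype V] [DecidableEq V] (A : V → V → Bool) (i j : V) :
    V → V → Bool :=
  fun x y =>
    let A1 : V → V → Bool := fun x y =>
      if x = i ∧ y = j then false else (A x y || (decide (x = i) && A j y))
    if ∀ u, u ≠ i → A u j = false then
      (A1 x y && !decide (x = j) && !decide (y = j))
    else A1 x y

/-- Labels after front elimination of `(i,j)`: for every successor `k` of `j` the
label of `(i,k)` becomes `c i k + c j k * c i j` if `(i,k)` was an edge and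
`c j k * c i j` for a fill edge; all other edges keep their labels. -/
noncomputable def frontLab {V : Type*} [DecidableEq V] (A : V → V → Bool)
    (c : V → V → ℝ) (i j : V) : V → V → ℝ :=
  fun x y =>
    if x = i ∧ A j y then
      (if A x y then c x y + c j y * c x j else c j y * c x j)
    else c x y

section FrontElimAux
set_option linter.unusedSectionVars false
variable {V : Type*} [Fintype V] [DecidableEq V]

/-- The weight matrix of an edge-labeled graph. -/
noncomputable def wmatFE (R : V → V → Prop) (c : V → V → ℝ) : Matrix V V ℝ :=
  Matrix.of fun x y => if R x y then c x y else 0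

/-- The product of weight-matrix entries along a list of vertices. -/
noncomputable def wprodFE (R : V → V → Prop) (c : V → V → ℝ) (p : List V) : ℝ :=
  ((p.zip p.tail).map (fun e => wmatFE R c e.1 e.2)).prod

lemma wmatFE_apply (R : V → V → Prop) (c : V → V → ℝ) (x y : V) :
    wmatFE R c x y = if R x y then c x y else 0 := rfl

lemma wmatFE_pos {R : V → V → Prop} (c : V → V → ℝ) {x y : V} (h : R x y) :
    wmatFE R c x y = c x y := by
  unfold wmatFE; simp only [Matrix.of_apply]; exact if_pos h

lemma wmatFE_neg {R : V → V → Prop} (c : V → V → ℝ) {x y : V} (h : ¬ R x y) :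
    wmatFE R c x y = 0 := by
  unfold wmatFE; simp only [Matrix.of_apply]; exact if_neg h

lemma wmatFE_congr {R1 R2 : V → V → Prop} (c : V → V → ℝ) {x y : V}
    (h : R1 x y ↔ R2 x y) : wmatFE R1 c x y = wmatFE R2 c x y := by
  unfold wmatFE; simp only [Matrix.of_apply]; exact if_congr h rfl rfl

lemma chain'_of_mem_zip_FE (R : V → V → Prop) :
    ∀ (p : List V), p.Chain' R → ∀ a b : V, (a, b) ∈ p.zip p.tail → R a b
  | [] => by simp
  | [x] => by simp
  | x :: y :: l => by
    intro h a b hm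
    change List.IsChain R (x :: y :: l) at h
    rw [List.isChain_cons_cons] at h
    simp only [List.tail_cons, List.zip_cons_cons, List.mem_cons] at hm
    rcases hm with h1 | h2
    · obtain ⟨rfl, rfl⟩ : a = x ∧ b = y := ⟨congrArg Prod.fst h1, congrArg Prod.snd h1⟩
      exact h.1
    · exact chain'_of_mem_zip_FE R (y :: l) h.2 a b h2

lemma chain'_length_le_FE (R : V → V → Prop) (f : V → ℕ)
    (hacyc : ∀ a b, R a b → f a < f b) (p : List V) (hp : p.Chain' R) :
    p.length ≤ Fintype.card V := by
  have h1 : (p.map f).Chain' (· < ·) := by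
    show List.IsChain (· < ·) (p.map f)
    rw [List.isChain_map]
    exact List.IsChain.imp (fun a b => hacyc a b) hp
  have h2 : (p.map f).Pairwise (· < ·) := List.isChain_iff_pairwise.mp h1
  have h3 : p.Nodup := by
    have := h2.imp (fun {a b} (h : a < b) => Nat.ne_of_lt h)
    exact (List.Nodup.of_map f (by exact this))
  simpa using h3.length_le_card

lemma wprodFE_cons (R : V → V → Prop) (c : V → V → ℝ) (a b : V) (l : List V) :
    wprodFE R c (a :: b :: l) = wmatFE R c a b * wprodFE R c (b :: l) := by
  simp [wprodFE]

lemma wprodFE_eq_zero (R : V → V → Prop) (c : V → V → ℝ) :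
    ∀ (p : List V), ¬ p.Chain' R → wprodFE R c p = 0
  | [] => by intro h; exact absurd List.isChain_nil h
  | [x] => by intro h; exact absurd (List.isChain_singleton x) h
  | x :: y :: l => by
    intro h
    change ¬ List.IsChain R (x :: y :: l) at h
    rw [List.isChain_cons_cons] at h
    rw [wprodFE_cons]
    by_cases hxy : R x y
    · have : ¬ (y :: l).Chain' R := fun hc => h ⟨hxy, hc⟩
      rw [wprodFE_eq_zero R c (y :: l) this, mul_zero]
    · simp [wmatFE, hxy]

lemma pow_apply_eq_sum_FE (R : V → V → Prop) (c : V → V → ℝ) (t : V) :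
    ∀ (n : ℕ) (s : V), ((wmatFE R c) ^ (n + 1)) s t
      = ∑ v : Fin n → V, wprodFE R c (s :: List.ofFn v ++ [t])
  | 0, s => by
    simp [wprodFE, wmatFE]
  | (n + 1), s => by
    rw [pow_succ', Matrix.mul_apply]
    have h1 : ∀ u : V, ((wmatFE R c) ^ (n + 1)) u t
        = ∑ v : Fin n → V, wprodFE R c (u :: List.ofFn v ++ [t]) :=
      fun u => pow_apply_eq_sum_FE R c t n u
    calc ∑ u : V, wmatFE R c s u * ((wmatFE R c) ^ (n + 1)) u t
        = ∑ u : V, ∑ v : Fin n → V, wmatFE R c s u * wprodFE R c (u :: List.ofFn v ++ [t]) := by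
          simp_rw [h1, Finset.mul_sum]
      _ = ∑ u : V, ∑ v : Fin n → V, wprodFE R c (s :: (u :: List.ofFn v ++ [t])) := by
          apply Finset.sum_congr rfl; intro u _
          apply Finset.sum_congr rfl; intro v _
          rw [show (u :: List.ofFn v ++ [t]) = u :: (List.ofFn v ++ [t]) from rfl,
            wprodFE_cons]
      _ = ∑ w : Fin (n + 1) → V, wprodFE R c (s :: List.ofFn w ++ [t]) := by
          symm
          rw [← Equiv.sum_comp (Fin.consEquiv fun _ => V)
            (fun w => wprodFE R c (s :: List.ofFn w ++ [t])), Fintype.sum_prod_type]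
          apply Finset.sum_congr rfl; intro u _
          apply Finset.sum_congr rfl; intro v _
          simp [Fin.consEquiv, List.ofFn_succ]

lemma pathSum_eq_powerSum_FE (R : V → V → Prop) (c : V → V → ℝ) (f : V → ℕ)
    (hacyc : ∀ a b, R a b → f a < f b) (s t : V) :
    pathSum R c s t
      = ∑ n ∈ Finset.range (Fintype.card V), ((wmatFE R c) ^ (n + 1)) s t := by
  classical
  set N := Fintype.card V with hN
  have hfin : {p : List V | IsPath R s t p}.Finite :=
    (List.finite_length_le V N).subset
      (fun p hp => chain'_length_le_FE R f hacyc p hp.2.1)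
  haveI : Fintype {p : List V // IsPath R s t p} := hfin.fintype
  rw [pathSum, tsum_fintype]
  have hcw : ∀ p : {p : List V // IsPath R s t p},
      ((p.1.zip p.1.tail).map (fun e => c e.1 e.2)).prod = wprodFE R c p.1 := by
    intro p
    unfold wprodFE
    congr 1
    apply List.map_congr_left
    intro e he
    have hR : R e.1 e.2 := chain'_of_mem_zip_FE R p.1 p.2.2.1 e.1 e.2 (by simpa using he)
    simp [wmatFE, hR]
  simp_rw [hcw]
  have hrhs : ∑ n ∈ Finset.range N, ((wmatFE R c) ^ (n + 1)) s t
      = ∑ x ∈ (Finset.range N).sigma (fun n => (Finset.univ : Finset (Fin n → V))),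
          wprodFE R c (s :: List.ofFn x.2 ++ [t]) := by
    rw [Finset.sum_sigma]
    apply Finset.sum_congr rfl; intro n _
    exact pow_apply_eq_sum_FE R c t n s
  rw [hrhs]
  set σ := (Finset.range N).sigma (fun n => (Finset.univ : Finset (Fin n → V))) with hσ
  set P : (Σ n : ℕ, Fin n → V) → Prop :=
    fun x => (s :: List.ofFn x.2 ++ [t]).Chain' R with hP
  rw [← Finset.sum_filter_add_sum_filter_not σ P]
  have hzero : ∑ x ∈ σ.filter (fun x => ¬ P x), wprodFE R c (s :: List.ofFn x.2 ++ [t]) = 0 := by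
    apply Finset.sum_eq_zero
    intro x hx
    exact wprodFE_eq_zero R c _ (Finset.mem_filter.mp hx).2
  rw [hzero, add_zero]
  symm
  apply Finset.sum_bij (fun (x : Σ n : ℕ, Fin n → V) (hx : x ∈ σ.filter P) =>
    (⟨s :: List.ofFn x.2 ++ [t], by
      obtain ⟨hmem, hch⟩ := Finset.mem_filter.mp hx
      exact ⟨by simp, hch, rfl, List.getLast?_concat⟩⟩ : {p : List V // IsPath R s t p}))
  · intro a ha; exact Finset.mem_univ _
  · intro x₁ h₁ x₂ h₂ heq
    have hl := congrArg (fun p => p.1) heq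
    have hlen : x₁.1 = x₂.1 := by
      have := congrArg List.length hl
      simpa using this
    obtain ⟨n, v₁⟩ := x₁
    obtain ⟨n₂, v₂⟩ := x₂
    subst hlen
    have h3 : s :: List.ofFn v₁ = s :: List.ofFn v₂ := (List.append_inj hl (by simp)).1
    have h4 : List.ofFn v₁ = List.ofFn v₂ := by injection h3
    rw [List.ofFn_inj.mp h4]
  · intro b _
    obtain ⟨q, hq⟩ := b
    obtain ⟨hq2, hqch, hqh, hql⟩ := hq
    obtain ⟨q', rfl⟩ : ∃ q', q = s :: q' := by
      cases q with
      | nil => simp at hqh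
      | cons a l =>
        simp only [List.head?_cons, Option.some.injEq] at hqh
        exact ⟨l, by rw [hqh]⟩
    have hq'ne : q' ≠ [] := by
      intro h; subst h; simp at hq2
    have hlast : q'.getLast hq'ne = t := by
      have h1 : (s :: q').getLast (by simp) = t := by
        have h2 := hql
        rw [List.getLast?_eq_getLast (l := s :: q') (by simp)] at h2
        exact Option.some.inj h2
      rwa [List.getLast_cons hq'ne] at h1
    have hsplit : q' = q'.dropLast ++ [t] := by
      conv_lhs => rw [← List.dropLast_append_getLast hq'ne]
      rw [hlast]
    refine ⟨⟨q'.dropLast.length, fun i => q'.dropLast.get i⟩, ?_, ?_⟩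
    · rw [Finset.mem_filter]
      constructor
      · rw [hσ, Finset.mem_sigma]
        refine ⟨Finset.mem_range.mpr ?_, Finset.mem_univ _⟩
        have hle : (s :: q').length ≤ N := chain'_length_le_FE R f hacyc _ hqch
        have hq'pos : 0 < q'.length := List.length_pos_iff.mpr hq'ne
        have hd : q'.dropLast.length = q'.length - 1 := List.length_dropLast
        simp only [List.length_cons] at hle
        show q'.dropLast.length < N
        omega
      · show ((s :: List.ofFn (fun i => q'.dropLast.get i)) ++ [t]).Chain' R
        rw [List.ofFn_get, List.cons_append, ← hsplit]
        exact hqch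
    · apply Subtype.ext
      show (s :: List.ofFn (fun i => q'.dropLast.get i)) ++ [t] = s :: q'
      rw [List.ofFn_get, List.cons_append, ← hsplit]
  · intro a ha; rfl

lemma pow_card_succ_eq_zero_FE (R : V → V → Prop) (c : V → V → ℝ) (f : V → ℕ)
    (hacyc : ∀ a b, R a b → f a < f b) :
    (wmatFE R c) ^ (Fintype.card V + 1) = 0 := by
  ext s t
  rw [pow_apply_eq_sum_FE R c t (Fintype.card V) s]
  show _ = (0 : ℝ)
  apply Finset.sum_eq_zero
  intro v _
  apply wprodFE_eq_zero
  intro hch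
  have h1 := chain'_length_le_FE R f hacyc _ hch
  simp at h1

lemma pow_apply_congr_FE (j : V) (X Y : Matrix V V ℝ) (hXj : ∀ x, X x j = 0)
    (hYj : ∀ x, Y x j = 0) (hagree : ∀ x y, x ≠ j → X x y = Y x y) :
    ∀ (n : ℕ) (x : V), x ≠ j → ∀ y, (X ^ n) x y = (Y ^ n) x y := by
  intro n
  induction n with
  | zero => simp
  | succ n ih =>
    intro x hx y
    rw [pow_succ', pow_succ', Matrix.mul_apply, Matrix.mul_apply]
    apply Finset.sum_congr rfl
    intro u _
    by_cases hu : u = j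
    · subst hu; rw [hXj, hYj, zero_mul, zero_mul]
    · rw [hagree x u hx, ih u hu y]

lemma frontAdj_iso_FE (A : V → V → Bool) (i j : V) (h0 : ∀ u, u ≠ i → A u j = false)
    (x y : V) : frontAdj A i j x y = true ↔
      ((¬(x = i ∧ y = j) ∧ (A x y = true ∨ (x = i ∧ A j y = true)))
        ∧ x ≠ j ∧ y ≠ j) := by
  unfold frontAdj
  simp only [if_pos h0]
  by_cases hxy : x = i ∧ y = j <;> simp [hxy]
  tauto

lemma frontAdj_niso_FE (A : V → V → Bool) (i j : V) (h0 : ¬ ∀ u, u ≠ i → A u j = false)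
    (x y : V) : frontAdj A i j x y = true ↔
      (¬(x = i ∧ y = j) ∧ (A x y = true ∨ (x = i ∧ A j y = true))) := by
  unfold frontAdj
  simp only [if_neg h0]
  by_cases hxy : x = i ∧ y = j <;> simp [hxy]

end FrontElimAux

/-- **Front edge elimination preserves source-to-sink path sums**: if `(i,j)` is an
edge of the edge-labeled dag `G` whose target `j` is not a sink, then for every source
`s` and sink `t` of `G`, `J_{G'}(s,t) = J_G(s,t)` where `G'` is obtained from `G` by
front elimination of `(i,j)`. -/
theorem front_elimination_preserves_path_sums
    {V : Type*} [Fintype V] [DecidableEq V]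
    (A : V → V → Bool) (c : V → V → ℝ)
    (f : V → ℕ) (hacyc : ∀ a b, A a b = true → f a < f b)
    (i j : V) (hij : A i j = true) (hnotsink : ∃ k, A j k = true) :
    ∀ s t : V, (∀ u, A u s = false) → (∀ w, A t w = false) →
      pathSum (fun a b => frontAdj A i j a b = true) (frontLab A c i j) s t
        = pathSum (fun a b => A a b = true) c s t := by
  intro s t hs ht
  classical
  set N := Fintype.card V with hNdef
  obtain ⟨k0, hk0⟩ := hnotsink
  have htj : t ≠ j := by
    intro h; subst h; rw [ht k0] at hk0; exact Bool.false_ne_true hk0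
  have hsj : s ≠ j := by
    intro h; subst h; rw [hs i] at hij; exact Bool.false_ne_true hij
  have hji : j ≠ i := by
    intro h; exact lt_irrefl _ (h ▸ hacyc i j hij)
  have hjj : ¬ (A j j = true) := fun h => lt_irrefl _ (hacyc j j h)
  set R : V → V → Prop := fun a b => A a b = true with hRdef
  set R' : V → V → Prop := fun a b => frontAdj A i j a b = true with hR'def
  set RB : V → V → Prop :=
    fun x y => ¬(x = i ∧ y = j) ∧ (A x y = true ∨ (x = i ∧ A j y = true)) with hRBdef
  set lab := frontLab A c i j with hlabdef
  have hacycB : ∀ a b, RB a b → f a < f b := by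
    rintro a b ⟨-, h | ⟨rfl, h⟩⟩
    · exact hacyc _ _ h
    · exact lt_trans (hacyc _ _ hij) (hacyc _ _ h)
  have hfr : ∀ a b, R' a b → RB a b := by
    intro a b h
    by_cases h0 : ∀ u, u ≠ i → A u j = false
    · exact ((frontAdj_iso_FE A i j h0 a b).mp h).1
    · exact (frontAdj_niso_FE A i j h0 a b).mp h
  have hacycR' : ∀ a b, R' a b → f a < f b := fun a b h => hacycB a b (hfr a b h)
  set M := wmatFE R c with hMdef
  set B := wmatFE RB lab with hBdef
  set M' := wmatFE R' lab with hM'def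
  rw [pathSum_eq_powerSum_FE R' lab f hacycR' s t,
    pathSum_eq_powerSum_FE R c f hacyc s t]
  -- Step II: replace M' by B
  have hstep2 : ∀ n : ℕ, (M' ^ n) s t = (B ^ n) s t := by
    by_cases h0 : ∀ u, u ≠ i → A u j = false
    · -- j gets isolated; both matrices have zero j-column and agree off row j
      refine fun n => pow_apply_congr_FE j M' B ?_ ?_ ?_ n s hsj t
      · intro x
        have h1 : ¬ R' x j := by
          show ¬ (frontAdj A i j x j = true)
          rw [frontAdj_iso_FE A i j h0 x j]
          rintro ⟨-, -, hj⟩; exact hj rfl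
        rw [hM'def]; exact wmatFE_neg (R := R') lab h1
      · intro x
        have h2 : ¬ RB x j := by
          show ¬ (¬(x = i ∧ j = j) ∧ (A x j = true ∨ (x = i ∧ A j j = true)))
          rintro ⟨ha, hb | ⟨hxi2, hc⟩⟩
          · by_cases hxi : x = i
            · exact ha ⟨hxi, rfl⟩
            · rw [h0 x hxi] at hb; exact Bool.false_ne_true hb
          · exact hjj hc
        rw [hBdef]; exact wmatFE_neg (R := RB) lab h2
      · intro x y hx
        have hiff : R' x y ↔ ((¬(x = i ∧ y = j) ∧ (A x y = true ∨ (x = i ∧ A j y = true)))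
            ∧ x ≠ j ∧ y ≠ j) := by
          show (frontAdj A i j x y = true) ↔ _
          rw [frontAdj_iso_FE A i j h0 x y]
        by_cases hy : y = j
        · have h1 : ¬ R' x y := fun h => ((hiff.mp h).2.2) hy
          have h2 : ¬ RB x y := by
            show ¬ (¬(x = i ∧ y = j) ∧ (A x y = true ∨ (x = i ∧ A j y = true)))
            rintro ⟨ha, hb | ⟨hxi2, hc⟩⟩
            · by_cases hxi : x = i
              · exact ha ⟨hxi, hy⟩
              · rw [hy, h0 x hxi] at hb; exact Bool.false_ne_true hb
            · rw [hy] at hc; exact hjj hc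
          rw [hM'def, hBdef, wmatFE_neg (R := R') lab h1, wmatFE_neg (R := RB) lab h2]
        · have hiff2 : R' x y ↔ RB x y := by
            rw [hiff]
            show _ ↔ (¬(x = i ∧ y = j) ∧ (A x y = true ∨ (x = i ∧ A j y = true)))
            exact ⟨fun h => h.1, fun h => ⟨h, hx, hy⟩⟩
          rw [hM'def, hBdef]; exact wmatFE_congr lab hiff2
    · have hMB : M' = B := by
        ext x y
        have hiff : R' x y ↔ RB x y := by
          show (frontAdj A i j x y = true) ↔ _
          rw [frontAdj_niso_FE A i j h0 x y]
        rw [hM'def, hBdef]; exact wmatFE_congr lab hiff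
      intro n; rw [hMB]
  rw [Finset.sum_congr rfl (fun n _ => hstep2 (n + 1))]
  -- Step III: the algebraic identity
  have hMnil : M ^ (N + 1) = 0 := pow_card_succ_eq_zero_FE R c f hacyc
  have hBnil : B ^ (N + 1) = 0 := pow_card_succ_eq_zero_FE RB lab f hacycB
  have hMnil2 : M ^ (N + 2) = 0 := by rw [pow_succ, hMnil, zero_mul]
  have hBnil2 : B ^ (N + 2) = 0 := by rw [pow_succ, hBnil, zero_mul]
  set GM : Matrix V V ℝ := ∑ n ∈ Finset.range (N + 2), M ^ n with hGMdef
  set GB : Matrix V V ℝ := ∑ n ∈ Finset.range (N + 2), B ^ n with hGBdef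
  have hGM1 : (1 - M) * GM = 1 := by
    have h := mul_geom_sum M (N + 2)
    rw [hMnil2] at h
    have h2 : (1 - M) * GM = -((M - 1) * GM) := by noncomm_ring
    rw [h2, h]; noncomm_ring
  have hGB2 : GB * (1 - B) = 1 := by
    have h := geom_sum_mul B (N + 2)
    rw [hBnil2] at h
    have h2 : GB * (1 - B) = -(GB * (B - 1)) := by noncomm_ring
    rw [h2, h]; noncomm_ring
  set E : Matrix V V ℝ := Matrix.single i j (c i j) with hEdef
  have hE2 : E * E = 0 := Matrix.single_mul_single_of_ne (c i j) i j i hji (c i j)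
  have hBMa : B = M - E + E * M := by
    ext x y
    rw [Matrix.add_apply, Matrix.sub_apply]
    by_cases hx : x = i
    · rw [hx]
      have hEM : (E * M) i y = c i j * M j y := by
        rw [hEdef]; exact Matrix.single_mul_apply_same (c i j) i j y M
      rw [hEM]
      by_cases hyj : y = j
      · rw [hyj]
        have hBij : B i j = 0 := by
          rw [hBdef]
          refine wmatFE_neg (R := RB) lab ?_
          rintro ⟨h1, -⟩; exact h1 ⟨rfl, rfl⟩
        have hMij : M i j = c i j := by rw [hMdef]; exact wmatFE_pos (R := R) c hij
        have hEij : E i j = c i j := by rw [hEdef]; exact Matrix.single_apply_same ..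
        have hMjj : M j j = 0 := by rw [hMdef]; exact wmatFE_neg (R := R) c hjj
        rw [hBij, hMij, hEij, hMjj]; ring
      · have hEiy : E i y = 0 := by
          rw [hEdef]
          exact Matrix.single_apply_of_col_ne i i (fun h => hyj h.symm) (c i j)
        rw [hEiy]
        by_cases hA : A j y = true
        · have hRB : RB i y := ⟨fun h => hyj h.2, Or.inr ⟨rfl, hA⟩⟩
          have hBiy : B i y = lab i y := by rw [hBdef]; exact wmatFE_pos (R := RB) lab hRB
          have hMjy : M j y = c j y := by rw [hMdef]; exact wmatFE_pos (R := R) c hA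
          by_cases hAi : A i y = true
          · have hlab : lab i y = c i y + c j y * c i j := by
              simp [hlabdef, frontLab, hA, hAi]
            have hMiy : M i y = c i y := by rw [hMdef]; exact wmatFE_pos (R := R) c hAi
            rw [hBiy, hlab, hMiy, hMjy]; ring
          · have hlab : lab i y = c j y * c i j := by
              simp [hlabdef, frontLab, hA, hAi]
            have hMiy : M i y = 0 := by rw [hMdef]; exact wmatFE_neg (R := R) c hAi
            rw [hBiy, hlab, hMiy, hMjy]; ring
        · have hlab : lab i y = c i y := by simp [hlabdef, frontLab, hA]
          have hMjy : M j y = 0 := by rw [hMdef]; exact wmatFE_neg (R := R) c hA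
          by_cases hAi : A i y = true
          · have hRB : RB i y := ⟨fun h => hyj h.2, Or.inl hAi⟩
            have hBiy : B i y = lab i y := by rw [hBdef]; exact wmatFE_pos (R := RB) lab hRB
            have hMiy : M i y = c i y := by rw [hMdef]; exact wmatFE_pos (R := R) c hAi
            rw [hBiy, hlab, hMiy, hMjy]; ring
          · have hRB : ¬ RB i y := by
              rintro ⟨-, h | ⟨-, h⟩⟩
              · exact hAi h
              · exact hA h
            have hBiy : B i y = 0 := by rw [hBdef]; exact wmatFE_neg (R := RB) lab hRB
            have hMiy : M i y = 0 := by rw [hMdef]; exact wmatFE_neg (R := R) c hAi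
            rw [hBiy, hMiy, hMjy]; ring
    · have hEM : (E * M) x y = 0 := by
        rw [hEdef]; exact Matrix.single_mul_apply_of_ne (c i j) i j x y hx M
      have hExy : E x y = 0 := by
        rw [hEdef]
        exact Matrix.single_apply_of_row_ne (fun h => hx h.symm) j y (c i j)
      have hlab : lab x y = c x y := by simp [hlabdef, frontLab, hx]
      rw [hEM, hExy]
      by_cases hAxy : A x y = true
      · have hRB : RB x y := ⟨fun h => hx h.1, Or.inl hAxy⟩
        have hB : B x y = lab x y := by rw [hBdef]; exact wmatFE_pos (R := RB) lab hRB
        have hM : M x y = c x y := by rw [hMdef]; exact wmatFE_pos (R := R) c hAxy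
        rw [hB, hM, hlab]; ring
      · have hRB : ¬ RB x y := by
          rintro ⟨-, h | ⟨h, -⟩⟩
          · exact hAxy h
          · exact hx h
        have hB : B x y = 0 := by rw [hBdef]; exact wmatFE_neg (R := RB) lab hRB
        have hM : M x y = 0 := by rw [hMdef]; exact wmatFE_neg (R := R) c hAxy
        rw [hB, hM]; ring
  have hkey : 1 - B = (1 + E) * (1 - M) := by
    rw [hBMa]; noncomm_ring
  have hGBval : GB = GM * (1 - E) := by
    have h1 : (1 - B) * (GM * (1 - E)) = 1 := by
      rw [hkey]
      calc (1 + E) * (1 - M) * (GM * (1 - E))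
          = (1 + E) * ((1 - M) * GM) * (1 - E) := by noncomm_ring
        _ = (1 + E) * (1 - E) := by rw [hGM1, mul_one]
        _ = 1 - E * E := by noncomm_ring
        _ = 1 := by rw [hE2, sub_zero]
    calc GB = GB * ((1 - B) * (GM * (1 - E))) := by rw [h1, mul_one]
      _ = (GB * (1 - B)) * (GM * (1 - E)) := by rw [mul_assoc]
      _ = GM * (1 - E) := by rw [hGB2, one_mul]
  have hGBst : GB s t = GM s t := by
    rw [hGBval, Matrix.mul_sub, Matrix.mul_one, Matrix.sub_apply,
      Matrix.mul_single_apply_of_ne (c i j) i j s t htj GM, sub_zero]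
  -- assemble
  have hsplitB : GB s t = (∑ n ∈ Finset.range N, (B ^ (n + 1)) s t) + (1 : Matrix V V ℝ) s t := by
    rw [hGBdef, Finset.sum_range_succ' (fun n => B ^ n) (N + 1)]
    rw [Finset.sum_range_succ (fun n => B ^ (n + 1)) N, hBnil]
    simp [Matrix.sum_apply]
  have hsplitM : GM s t = (∑ n ∈ Finset.range N, (M ^ (n + 1)) s t) + (1 : Matrix V V ℝ) s t := by
    rw [hGMdef, Finset.sum_range_succ' (fun n => M ^ n) (N + 1)]
    rw [Finset.sum_range_succ (fun n => M ^ (n + 1)) N, hMnil]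
    simp [Matrix.sum_apply]
  have := hGBst
  rw [hsplitB, hsplitM] at this
  exact add_right_cancel this
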